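/- arXiv:2503.07578 — 5 statements merged into one kernel-verified Lean document; each statement's English description precedes it below -/
import Mathlib

section
/- Let d, r be positive integers with r < d, let E be a d × r real matrix with orthonormal columns (Eᵀ E = I_r), and let Σ be an r × r symmetric positive definite real matrix. Then the set of maximizers of the function U ↦ tr(E Eᵀ U Σ Uᵀ) over the set {U ∈ ℝ^{d×r} : Uᵀ U = I_r} is exactly {E Q : Q an r × r orthogonal matrix}. -/
open Matrix

set_option linter.unusedVariables false
set_option linter.unusedSectionVars false

section aux
variable {n : Type*} [Fintype n] [DecidableEq n]
open scoped MatrixOrder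


lemma psd_trace_nonneg {A : Matrix n n ℝ} (hA : A.PosSemidef) : 0 ≤ A.trace := by
  obtain ⟨B, rfl⟩ := CStarAlgebra.nonneg_iff_eq_star_mul_self.mp hA.nonneg
  simp only [Matrix.trace, Matrix.diag, Matrix.mul_apply, Matrix.conjTranspose_apply,
    Matrix.star_apply, star_trivial]
  exact Finset.sum_nonneg fun i _ => Finset.sum_nonneg fun j _ => mul_self_nonneg _

lemma psd_trace_zero {A : Matrix n n ℝ} (hA : A.PosSemidef) (h : A.trace = 0) : A = 0 := by
  obtain ⟨B, rfl⟩ := CStarAlgebra.nonneg_iff_eq_star_mul_self.mp hA.nonneg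
  suffices hB : B = 0 by simp [hB]
  simp only [Matrix.trace, Matrix.diag, Matrix.mul_apply, Matrix.conjTranspose_apply,
    Matrix.star_apply, star_trivial] at h
  ext j i
  have h1 := (Finset.sum_eq_zero_iff_of_nonneg (fun i _ =>
    Finset.sum_nonneg fun j _ => mul_self_nonneg (B j i))).mp h i (Finset.mem_univ i)
  have h2 := (Finset.sum_eq_zero_iff_of_nonneg (fun j _ =>
    mul_self_nonneg (B j i))).mp h1 j (Finset.mem_univ j)
  simpa [mul_self_eq_zero] using h2

lemma trace_mul_psd_nonneg {S P : Matrix n n ℝ} (hS : S.PosSemidef) (hP : P.PosSemidef) :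
    0 ≤ (S * P).trace := by
  set T := CFC.sqrt S with hT
  have hTT : T * T = S := CFC.sqrt_mul_sqrt_self S hS.nonneg
  have hTh : Tᴴ = T := (CFC.sqrt_nonneg S).posSemidef.isHermitian
  have key : (S * P).trace = (T * P * Tᴴ).trace := by
    rw [hTh, ← hTT, Matrix.mul_assoc, Matrix.mul_assoc, Matrix.trace_mul_comm, Matrix.mul_assoc]
  rw [key]
  exact psd_trace_nonneg (hP.mul_mul_conjTranspose_same T)

lemma trace_mul_posdef_zero {S P : Matrix n n ℝ} (hS : S.PosDef) (hP : P.PosSemidef)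
    (h : (S * P).trace = 0) : P = 0 := by
  set T := CFC.sqrt S with hT
  have hTT : T * T = S := CFC.sqrt_mul_sqrt_self S hS.posSemidef.nonneg
  have hTh : Tᴴ = T := (CFC.sqrt_nonneg S).posSemidef.isHermitian
  have key : (S * P).trace = (T * P * Tᴴ).trace := by
    rw [hTh, ← hTT, Matrix.mul_assoc, Matrix.mul_assoc, Matrix.trace_mul_comm, Matrix.mul_assoc]
  have h0 : T * P * Tᴴ = 0 :=
    psd_trace_zero (hP.mul_mul_conjTranspose_same T) (by rw [← key, h])
  rw [hTh] at h0
  have hdet : IsUnit T.det := by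
    have h2 : T.det * T.det = S.det := by rw [← Matrix.det_mul, hTT]
    have h3 : S.det ≠ 0 := ne_of_gt hS.det_pos
    exact isUnit_iff_ne_zero.mpr (fun hz => h3 (by rw [← h2, hz, mul_zero]))
  calc P = T⁻¹ * (T * P * T) * T⁻¹ := by
        rw [Matrix.mul_assoc (T⁻¹) _ _, Matrix.mul_assoc (T*P) T T⁻¹,
          Matrix.mul_nonsing_inv _ hdet, Matrix.mul_one, ← Matrix.mul_assoc,
          Matrix.nonsing_inv_mul _ hdet, Matrix.one_mul]
    _ = 0 := by rw [h0]; simp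

end aux

section main
variable {d r : ℕ} (E : Matrix (Fin d) (Fin r) ℝ) (S : Matrix (Fin r) (Fin r) ℝ)

lemma value_eq (W : Matrix (Fin d) (Fin r) ℝ) :
    (E * Eᵀ * W * S * Wᵀ).trace = (S * ((Eᵀ * W)ᵀ * (Eᵀ * W))).trace := by
  rw [Matrix.trace_mul_comm (E * Eᵀ * W * S) Wᵀ, Matrix.trace_mul_comm S]
  simp [Matrix.transpose_mul, Matrix.mul_assoc]

lemma residual_psd (hE : Eᵀ * E = 1) {W : Matrix (Fin d) (Fin r) ℝ} (hW : Wᵀ * W = 1) :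
    (1 - (Eᵀ * W)ᵀ * (Eᵀ * W)).PosSemidef := by
  have hproj : (E * Eᵀ) * (E * Eᵀ) = E * Eᵀ := by
    rw [Matrix.mul_assoc, ← Matrix.mul_assoc Eᵀ, hE, Matrix.one_mul]
  have hP2 : (1 - E * Eᵀ) * (1 - E * Eᵀ) = 1 - E * Eᵀ := by
    rw [Matrix.mul_sub, Matrix.sub_mul, Matrix.sub_mul, hproj, Matrix.mul_one,
      Matrix.one_mul, Matrix.mul_one]
    abel
  set X := (1 - E * Eᵀ) * W with hXdef
  have hX : Xᵀ * X = 1 - (Eᵀ * W)ᵀ * (Eᵀ * W) := by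
    have hsymm : (1 - E * Eᵀ)ᵀ = 1 - E * Eᵀ := by
      rw [Matrix.transpose_sub, Matrix.transpose_one, Matrix.transpose_mul,
        Matrix.transpose_transpose]
    rw [hXdef, Matrix.transpose_mul, hsymm, Matrix.mul_assoc,
      ← Matrix.mul_assoc (1 - E * Eᵀ), hP2]
    rw [Matrix.sub_mul, Matrix.one_mul, Matrix.mul_sub, hW, Matrix.transpose_mul,
      Matrix.transpose_transpose]
    simp [Matrix.mul_assoc]
  rw [← hX, ← Matrix.conjTranspose_eq_transpose_of_trivial]
  exact Matrix.posSemidef_conjTranspose_mul_self X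

lemma value_le (hE : Eᵀ * E = 1) (hS : S.PosDef) {W : Matrix (Fin d) (Fin r) ℝ}
    (hW : Wᵀ * W = 1) : (E * Eᵀ * W * S * Wᵀ).trace ≤ S.trace := by
  have h1 := trace_mul_psd_nonneg hS.posSemidef (residual_psd E hE hW)
  rw [Matrix.mul_sub, Matrix.mul_one, Matrix.trace_sub, sub_nonneg] at h1
  rw [value_eq]
  exact h1

lemma value_EQ (hE : Eᵀ * E = 1) {Q : Matrix (Fin r) (Fin r) ℝ} (hQ : Qᵀ * Q = 1) :
    (E * Eᵀ * (E * Q) * S * (E * Q)ᵀ).trace = S.trace := by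
  rw [value_eq]
  have : Eᵀ * (E * Q) = Q := by rw [← Matrix.mul_assoc, hE, Matrix.one_mul]
  rw [this, hQ, Matrix.mul_one]

end main

/-- For `E` a `d × r` (`r < d`) real matrix with orthonormal columns and `S`
an `r × r` symmetric positive definite matrix, the set of maximizers of
`U ↦ tr(E Eᵀ U S Uᵀ)` over `{U : Uᵀ U = I_r}` is exactly `{E Q : Q orthogonal}`. -/
theorem maximizers_pca_like {d r : ℕ} (hd : 0 < d) (hr : 0 < r) (hrd : r < d)
    (E : Matrix (Fin d) (Fin r) ℝ) (hE : Eᵀ * E = 1)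
    (S : Matrix (Fin r) (Fin r) ℝ) (hSsym : S.IsSymm) (hS : S.PosDef) :
    {U : Matrix (Fin d) (Fin r) ℝ | Uᵀ * U = 1 ∧
        ∀ W : Matrix (Fin d) (Fin r) ℝ, Wᵀ * W = 1 →
          (E * Eᵀ * W * S * Wᵀ).trace ≤ (E * Eᵀ * U * S * Uᵀ).trace} =
      {U : Matrix (Fin d) (Fin r) ℝ |
        ∃ Q : Matrix (Fin r) (Fin r) ℝ, Qᵀ * Q = 1 ∧ U = E * Q} := by
  ext U
  simp only [Set.mem_setOf_eq]
  constructor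
  · rintro ⟨hU, hmax⟩
    -- value at U equals tr S
    have hEfeas : Eᵀ * E = 1 := hE
    have hgeE := hmax E hEfeas
    have hvE : (E * Eᵀ * E * S * Eᵀ).trace = S.trace := by
      have := value_EQ E S hE (Q := 1) (by simp)
      simpa using this
    have hle := value_le E S hE hS hU
    have hval : (E * Eᵀ * U * S * Uᵀ).trace = S.trace := le_antisymm hle (by rw [← hvE]; exact hgeE)
    -- deduce residual = 0
    have hres : (S * (1 - (Eᵀ * U)ᵀ * (Eᵀ * U))).trace = 0 := by
      rw [Matrix.mul_sub, Matrix.mul_one, Matrix.trace_sub]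
      rw [value_eq] at hval
      rw [← hval]
      ring
    have hzero : (1 - (Eᵀ * U)ᵀ * (Eᵀ * U)) = 0 :=
      trace_mul_posdef_zero hS (residual_psd E hE hU) hres
    have hQorth : (Eᵀ * U)ᵀ * (Eᵀ * U) = 1 := by
      have := sub_eq_zero.mp hzero
      exact this.symm
    refine ⟨Eᵀ * U, hQorth, ?_⟩
    -- show U = E * (Eᵀ * U)
    set X := U - E * (Eᵀ * U) with hXdef
    have hXzero : Xᵀ * X = 0 := by
      rw [hXdef, Matrix.transpose_sub, Matrix.sub_mul, Matrix.mul_sub, Matrix.mul_sub, hU]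
      have h1 : Uᵀ * (E * (Eᵀ * U)) = (Eᵀ * U)ᵀ * (Eᵀ * U) := by
        rw [Matrix.transpose_mul, Matrix.transpose_transpose, Matrix.mul_assoc]
      have h2 : (E * (Eᵀ * U))ᵀ * U = (Eᵀ * U)ᵀ * (Eᵀ * U) := by
        rw [Matrix.transpose_mul, Matrix.transpose_mul, Matrix.transpose_transpose,
          Matrix.mul_assoc, Matrix.mul_assoc]
      have h3 : (E * (Eᵀ * U))ᵀ * (E * (Eᵀ * U)) = (Eᵀ * U)ᵀ * (Eᵀ * U) := by
        rw [Matrix.transpose_mul, Matrix.mul_assoc, ← Matrix.mul_assoc Eᵀ E, hE,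
          Matrix.one_mul]
      rw [h1, h2, h3, hQorth]
      abel
    have : X = 0 := by
      have := Matrix.conjTranspose_mul_self_eq_zero (A := X)
      rw [Matrix.conjTranspose_eq_transpose_of_trivial] at this
      exact this.mp hXzero
    have := sub_eq_zero.mp this
    exact this
  · rintro ⟨Q, hQ, rfl⟩
    have hUorth : (E * Q)ᵀ * (E * Q) = 1 := by
      rw [Matrix.transpose_mul, Matrix.mul_assoc, ← Matrix.mul_assoc Eᵀ E, hE,
        Matrix.one_mul, hQ]
    refine ⟨hUorth, fun W hW => ?_⟩
    rw [value_EQ E S hE hQ]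
    exact value_le E S hE hS hW
end

section
/- Fix σ > 0 and a measurable noise schedule σ_• : (0,1) → ℝ with 0 < σ_min ≤ σ_t ≤ σ_max < ∞ for all t ∈ (0,1). Define f_σ : (0, ∞) → ℝ by f_σ(u) := ∫₀¹ [ u/(σ² + σ_t² + 1)² − u/(σ_t² (u + σ_t²)) ] dt. Then f_σ is strictly convex on (0, ∞) and has a unique global minimizer at u* = σ² + 1. -/
open MeasureTheory

lemma split_div (c u : ℝ) (hc : 0 < c) (hu : 0 < u) :
    u / (c * (u + c)) = 1 / c - 1 / (u + c) := by
  field_simp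
  ring

lemma ptwise_conv_core (c x y a b : ℝ) (hc : 0 < c) (hx : 0 < x) (hy : 0 < y)
    (hxy : x ≠ y) (ha : 0 < a) (hb : 0 < b) (hab : a + b = 1) :
    1 / (a * x + b * y + c) < a / (x + c) + b / (y + c) := by
  have h1 : 0 < x + c := by linarith
  have h2 : 0 < y + c := by linarith
  have h3 : 0 < a * x + b * y + c := by positivity
  rw [div_add_div _ _ (ne_of_gt h1) (ne_of_gt h2), div_lt_div_iff₀ h3 (by positivity)]
  have hb1 : b = 1 - a := by linarith
  subst hb1
  nlinarith [mul_pos (mul_pos ha hb) (sq_pos_of_ne_zero (sub_ne_zero.mpr hxy))]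

lemma pt_conv (σ c x y a b : ℝ) (hσ : 0 < σ) (hc : 0 < c) (hx : 0 < x) (hy : 0 < y)
    (hxy : x ≠ y) (ha : 0 < a) (hb : 0 < b) (hab : a + b = 1) :
    (a*x+b*y) / (σ ^ 2 + c + 1) ^ 2 - (a*x+b*y) / (c * ((a*x+b*y) + c)) <
      a * (x / (σ ^ 2 + c + 1) ^ 2 - x / (c * (x + c)))
      + b * (y / (σ ^ 2 + c + 1) ^ 2 - y / (c * (y + c))) := by
  have hz : 0 < a*x+b*y := by positivity
  rw [split_div c x hc hx, split_div c y hc hy, split_div c _ hc hz]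
  have h := ptwise_conv_core c x y a b hc hx hy hxy ha hb hab
  have e1 : a * (x / (σ ^ 2 + c + 1) ^ 2 - (1/c - 1/(x+c)))
      + b * (y / (σ ^ 2 + c + 1) ^ 2 - (1/c - 1/(y+c)))
      = (a*x+b*y) / (σ ^ 2 + c + 1) ^ 2 - (a+b)*(1/c) + (a/(x+c) + b/(y+c)) := by
    ring
  rw [e1, hab]
  have e2 : a/(x+c) = a * (1/(x+c)) := by ring
  linarith

lemma pt_min (σ c u : ℝ) (hσ : 0 < σ) (hc : 0 < c) (hu : 0 < u) (hne : u ≠ σ^2 + 1) :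
    (σ^2+1) / (σ ^ 2 + c + 1) ^ 2 - (σ^2+1) / (c * ((σ^2+1) + c)) <
      u / (σ ^ 2 + c + 1) ^ 2 - u / (c * (u + c)) := by
  have hs : (0:ℝ) < σ^2+1 := by positivity
  rw [split_div c u hc hu, split_div c _ hc hs]
  have hA : 0 < σ^2 + c + 1 := by positivity
  have huc : 0 < u + c := by linarith
  have key : (u / (σ ^ 2 + c + 1) ^ 2 - (1/c - 1/(u+c)))
      - ((σ^2+1) / (σ ^ 2 + c + 1) ^ 2 - (1/c - 1/((σ^2+1)+c)))
      = (u - (σ^2+1))^2 / ((σ ^ 2 + c + 1)^2 * (u + c)) := by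
    have hAc : (σ^2+1) + c = σ^2 + c + 1 := by ring
    rw [hAc]
    field_simp
    ring
  have hpos : 0 < (u - (σ^2+1))^2 / ((σ ^ 2 + c + 1)^2 * (u + c)) := by
    have := sq_pos_of_ne_zero (sub_ne_zero.mpr hne)
    positivity
  linarith

lemma int_strict {f g : ℝ → ℝ}
    (hf : IntegrableOn f (Set.Ioo (0:ℝ) 1)) (hg : IntegrableOn g (Set.Ioo (0:ℝ) 1))
    (h : ∀ t ∈ Set.Ioo (0:ℝ) 1, f t < g t) :
    ∫ t in Set.Ioo (0:ℝ) 1, f t < ∫ t in Set.Ioo (0:ℝ) 1, g t := by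
  have hsub : IntegrableOn (fun t => g t - f t) (Set.Ioo (0:ℝ) 1) := hg.sub hf
  have hnn : 0 ≤ᵐ[volume.restrict (Set.Ioo (0:ℝ) 1)] (fun t => g t - f t) := by
    filter_upwards [ae_restrict_mem measurableSet_Ioo] with t ht
    exact sub_nonneg.mpr (le_of_lt (h t ht))
  have hpos : 0 < ∫ t in Set.Ioo (0:ℝ) 1, (g t - f t) := by
    rw [setIntegral_pos_iff_support_of_nonneg_ae hnn hsub]
    have hsubset : Set.Ioo (0:ℝ) 1 ⊆ Function.support (fun t => g t - f t) ∩ Set.Ioo (0:ℝ) 1 := by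
      intro t ht
      exact ⟨fun h0 => absurd h0 (sub_ne_zero.mpr (ne_of_gt (h t ht))), ht⟩
    calc (0:ENNReal) < volume (Set.Ioo (0:ℝ) 1) := by simp
      _ ≤ _ := measure_mono hsubset
  have := integral_sub hg hf
  rw [this] at hpos
  linarith

lemma integrable_F (σ : ℝ) (hσ : 0 < σ) (σt : ℝ → ℝ) (hmeas : Measurable σt)
    (σmin : ℝ) (hσmin : 0 < σmin)
    (hbound : ∀ t ∈ Set.Ioo (0 : ℝ) 1, σmin ≤ σt t) (u : ℝ) (hu : 0 < u) :
    IntegrableOn (fun t => u / (σ ^ 2 + (σt t) ^ 2 + 1) ^ 2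
      - u / ((σt t) ^ 2 * (u + (σt t) ^ 2))) (Set.Ioo (0:ℝ) 1) := by
  have hm : Measurable (fun t => u / (σ ^ 2 + (σt t) ^ 2 + 1) ^ 2
      - u / ((σt t) ^ 2 * (u + (σt t) ^ 2))) := by
    apply Measurable.sub
    · exact (measurable_const.div (((measurable_const.add ((hmeas.pow measurable_const))).add measurable_const).pow measurable_const))
    · exact measurable_const.div (((hmeas.pow measurable_const)).mul (measurable_const.add (hmeas.pow measurable_const)))
  apply Integrable.mono' (integrable_const (u + 1/σmin^2)) hm.aestronglyMeasurable.restrict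
  filter_upwards [ae_restrict_mem measurableSet_Ioo] with t ht
  have hs : σmin ≤ σt t := hbound t ht
  have hs2 : σmin^2 ≤ (σt t)^2 := by nlinarith
  have hs2pos : 0 < (σt t)^2 := by nlinarith
  have hA : (1:ℝ) ≤ (σ ^ 2 + (σt t) ^ 2 + 1) ^ 2 := by nlinarith
  have h1 : 0 ≤ u / (σ ^ 2 + (σt t) ^ 2 + 1) ^ 2 := by positivity
  have h1' : u / (σ ^ 2 + (σt t) ^ 2 + 1) ^ 2 ≤ u := by
    rw [div_le_iff₀ (by linarith)]
    nlinarith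
  have h2 : 0 ≤ u / ((σt t) ^ 2 * (u + (σt t) ^ 2)) := by positivity
  have h2' : u / ((σt t) ^ 2 * (u + (σt t) ^ 2)) ≤ 1/σmin^2 := by
    rw [div_le_div_iff₀ (by positivity) (by positivity)]
    nlinarith
  rw [Real.norm_eq_abs, abs_sub_le_iff]
  constructor <;> nlinarith

/-- For `σ > 0` and a measurable bounded noise schedule `σ_t` on `(0,1)`,
the per-eigenvalue loss `f_σ(u) = ∫₀¹ [u/(σ² + σ_t² + 1)² − u/(σ_t²(u + σ_t²))] dt`
is strictly convex on `(0, ∞)` with unique global minimizer `u* = σ² + 1`. -/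
theorem f_sigma_strictConvex_and_unique_min
    (σ : ℝ) (hσ : 0 < σ)
    (σt : ℝ → ℝ) (hmeas : Measurable σt)
    (σmin σmax : ℝ) (hσmin : 0 < σmin)
    (hbound : ∀ t ∈ Set.Ioo (0 : ℝ) 1, σmin ≤ σt t ∧ σt t ≤ σmax) :
    StrictConvexOn ℝ (Set.Ioi (0 : ℝ))
      (fun u => ∫ t in Set.Ioo (0 : ℝ) 1,
        (u / (σ ^ 2 + (σt t) ^ 2 + 1) ^ 2 - u / ((σt t) ^ 2 * (u + (σt t) ^ 2)))) ∧
    ∀ u ∈ Set.Ioi (0 : ℝ), u ≠ σ ^ 2 + 1 →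
      (∫ t in Set.Ioo (0 : ℝ) 1,
          ((σ ^ 2 + 1) / (σ ^ 2 + (σt t) ^ 2 + 1) ^ 2 -
            (σ ^ 2 + 1) / ((σt t) ^ 2 * ((σ ^ 2 + 1) + (σt t) ^ 2)))) <
        ∫ t in Set.Ioo (0 : ℝ) 1,
          (u / (σ ^ 2 + (σt t) ^ 2 + 1) ^ 2 - u / ((σt t) ^ 2 * (u + (σt t) ^ 2))) := by
  have hbound' : ∀ t ∈ Set.Ioo (0 : ℝ) 1, σmin ≤ σt t := fun t ht => (hbound t ht).1
  have hInt := integrable_F σ hσ σt hmeas σmin hσmin hbound'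
  have hc : ∀ t ∈ Set.Ioo (0 : ℝ) 1, 0 < (σt t)^2 := by
    intro t ht
    have := hbound' t ht
    nlinarith
  constructor
  · refine ⟨convex_Ioi 0, ?_⟩
    intro x hx y hy hxy a b ha hb hab
    simp only [smul_eq_mul]
    have hx' : 0 < x := hx
    have hy' : 0 < y := hy
    have hz : 0 < a * x + b * y := by positivity
    have hix := hInt x hx'
    have hiy := hInt y hy'
    have hiz := hInt _ hz
    have hrhs : a * (∫ t in Set.Ioo (0 : ℝ) 1,
          (x / (σ ^ 2 + (σt t) ^ 2 + 1) ^ 2 - x / ((σt t) ^ 2 * (x + (σt t) ^ 2))))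
        + b * (∫ t in Set.Ioo (0 : ℝ) 1,
          (y / (σ ^ 2 + (σt t) ^ 2 + 1) ^ 2 - y / ((σt t) ^ 2 * (y + (σt t) ^ 2))))
        = ∫ t in Set.Ioo (0 : ℝ) 1,
          (a * (x / (σ ^ 2 + (σt t) ^ 2 + 1) ^ 2 - x / ((σt t) ^ 2 * (x + (σt t) ^ 2)))
           + b * (y / (σ ^ 2 + (σt t) ^ 2 + 1) ^ 2 - y / ((σt t) ^ 2 * (y + (σt t) ^ 2)))) := by
      rw [integral_add (hix.const_mul a) (hiy.const_mul b),
        integral_const_mul, integral_const_mul]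
    rw [hrhs]
    apply int_strict hiz ((hix.const_mul a).add (hiy.const_mul b))
    intro t ht
    exact pt_conv σ ((σt t)^2) x y a b hσ (hc t ht) hx' hy' hxy ha hb hab
  · intro u hu hne
    have hu' : 0 < u := hu
    apply int_strict (hInt _ (by positivity)) (hInt u hu')
    intro t ht
    exact pt_min σ ((σt t)^2) u hσ (hc t ht) hu' hne
end

section
/- Fix σ > 0 and a measurable noise schedule σ_• : (0,1) → ℝ with 0 < σ_min ≤ σ_t ≤ σ_max < ∞ for all t ∈ (0,1), and define f_σ : (0, ∞) → ℝ by f_σ(u) := ∫₀¹ [ u/(σ² + σ_t² + 1)² − u/(σ_t² (u + σ_t²)) ] dt. Let r be a positive integer. Then for every r × r symmetric positive definite real matrix M with eigenvalues λ₁, …, λ_r, one has ∑_{i=1}^r f_σ(λ_i) ≥ r · f_σ(1 + σ²), with equality if and only if M = (1 + σ²) I_r. -/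
open Matrix MeasureTheory

lemma f_sigma_key
    (σ : ℝ)
    (σt : ℝ → ℝ) (hmeas : Measurable σt)
    (σmin σmax : ℝ) (hσmin : 0 < σmin)
    (hbound : ∀ t ∈ Set.Ioo (0 : ℝ) 1, σmin ≤ σt t ∧ σt t ≤ σmax)
    (f : ℝ → ℝ)
    (hf : ∀ u : ℝ, 0 < u → f u = ∫ t in Set.Ioo (0 : ℝ) 1,
      (u / (σ ^ 2 + (σt t) ^ 2 + 1) ^ 2 - u / ((σt t) ^ 2 * (u + (σt t) ^ 2))))
    (u : ℝ) (hu : 0 < u) :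
    f (1 + σ ^ 2) ≤ f u ∧ (f u = f (1 + σ ^ 2) ↔ u = 1 + σ ^ 2) := by
  have hσmax : 0 < σmax :=
    lt_of_lt_of_le hσmin ((hbound (1/2) (by norm_num)).1.trans (hbound (1/2) (by norm_num)).2)
  set u₀ : ℝ := 1 + σ ^ 2 with hu₀def
  have hu₀ : 0 < u₀ := by positivity
  set g : ℝ → ℝ → ℝ := fun v t =>
    v / (σ ^ 2 + (σt t) ^ 2 + 1) ^ 2 - v / ((σt t) ^ 2 * (v + (σt t) ^ 2)) with hg
  -- integrability
  have hint : ∀ v : ℝ, 0 < v → IntegrableOn (fun t => g v t) (Set.Ioo (0:ℝ) 1) volume := by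
    intro v hv
    have hmg : Measurable fun t => g v t := by
      apply Measurable.sub <;> apply Measurable.div <;> fun_prop
    apply Integrable.mono' (integrable_const (v + 1 / σmin ^ 2)) hmg.aestronglyMeasurable
    rw [ae_restrict_iff' measurableSet_Ioo]
    filter_upwards with t ht
    obtain ⟨h1, h2⟩ := hbound t ht
    have hs : 0 < σt t := lt_of_lt_of_le hσmin h1
    have ha : 0 ≤ v / (σ ^ 2 + (σt t) ^ 2 + 1) ^ 2 := by positivity
    have hb : 0 ≤ v / ((σt t) ^ 2 * (v + (σt t) ^ 2)) := by positivity
    have ha' : v / (σ ^ 2 + (σt t) ^ 2 + 1) ^ 2 ≤ v := by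
      rw [div_le_iff₀ (by positivity)]
      nlinarith [sq_nonneg σ, sq_nonneg (σt t), sq_nonneg (σ^2 + (σt t)^2)]
    have hb' : v / ((σt t) ^ 2 * (v + (σt t) ^ 2)) ≤ 1 / σmin ^ 2 := by
      rw [div_le_div_iff₀ (by positivity) (by positivity)]
      have h1' : σmin ^ 2 ≤ (σt t) ^ 2 := by nlinarith
      nlinarith [sq_nonneg (σt t)]
    rw [Real.norm_eq_abs, abs_sub_le_iff]
    constructor <;> nlinarith
  -- pointwise difference identity and lower bound
  set c : ℝ := (u - u₀) ^ 2 / ((σ ^ 2 + σmax ^ 2 + 1) ^ 2 * (u + σmax ^ 2)) with hc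
  have hdiff : ∀ t ∈ Set.Ioo (0:ℝ) 1, c ≤ g u t - g u₀ t := by
    intro t ht
    obtain ⟨h1, h2⟩ := hbound t ht
    have hs : 0 < σt t := lt_of_lt_of_le hσmin h1
    have heq : g u t - g u₀ t
        = (u - u₀) ^ 2 / ((σ ^ 2 + (σt t) ^ 2 + 1) ^ 2 * (u + (σt t) ^ 2)) := by
      simp only [hg, hu₀def]
      field_simp
      try ring
    rw [heq, hc]
    gcongr <;> first | positivity | nlinarith
  have hvol : (volume (Set.Ioo (0:ℝ) 1)).toReal = 1 := by simp
  have hsub : f u - f u₀ = ∫ t in Set.Ioo (0:ℝ) 1, (g u t - g u₀ t) := by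
    rw [hf u hu, hf u₀ hu₀, ← integral_sub (hint u hu) (hint u₀ hu₀)]
  have hlow : c ≤ f u - f u₀ := by
    rw [hsub]
    have := setIntegral_ge_of_const_le (μ := volume) measurableSet_Ioo
      (by simp) hdiff ((hint u hu).sub (hint u₀ hu₀))
    rwa [show volume.real (Set.Ioo (0:ℝ) 1) = 1 from hvol, one_smul] at this
  have hc0 : 0 ≤ c := by positivity
  constructor
  · linarith
  · constructor
    · intro hfe
      by_contra hne
      have hd : u - u₀ ≠ 0 := sub_ne_zero_of_ne hne
      have : 0 < c := div_pos (lt_of_le_of_ne (sq_nonneg _) (Ne.symm (pow_ne_zero 2 hd)))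
        (by positivity)
      linarith
    · intro h; rw [h]

/-- With `f_σ(u) = ∫₀¹ [u/(σ² + σ_t² + 1)² − u/(σ_t²(u + σ_t²))] dt`
(for `u > 0`), every `r × r` symmetric positive definite real matrix `M` with eigenvalues
`λ₁, …, λ_r` satisfies `∑ i, f_σ(λ_i) ≥ r · f_σ(1 + σ²)`, with equality iff
`M = (1 + σ²) I_r`. -/
theorem sum_f_sigma_eigenvalues_min
    (σ : ℝ) (hσ : 0 < σ)
    (σt : ℝ → ℝ) (hmeas : Measurable σt)
    (σmin σmax : ℝ) (hσmin : 0 < σmin)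
    (hbound : ∀ t ∈ Set.Ioo (0 : ℝ) 1, σmin ≤ σt t ∧ σt t ≤ σmax)
    (f : ℝ → ℝ)
    (hf : ∀ u : ℝ, 0 < u → f u = ∫ t in Set.Ioo (0 : ℝ) 1,
      (u / (σ ^ 2 + (σt t) ^ 2 + 1) ^ 2 - u / ((σt t) ^ 2 * (u + (σt t) ^ 2))))
    (r : ℕ) (hr : 0 < r)
    (M : Matrix (Fin r) (Fin r) ℝ) (hMsym : M.IsSymm) (hM : M.PosDef) :
    (r : ℝ) * f (1 + σ ^ 2) ≤ ∑ i, f (hM.isHermitian.eigenvalues i) ∧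
      ((∑ i, f (hM.isHermitian.eigenvalues i)) = (r : ℝ) * f (1 + σ ^ 2) ↔
        M = (1 + σ ^ 2) • (1 : Matrix (Fin r) (Fin r) ℝ)) := by
  have key := fun u hu => f_sigma_key σ σt hmeas σmin σmax hσmin hbound f hf u hu
  have hlam : ∀ i, 0 < hM.isHermitian.eigenvalues i := hM.eigenvalues_pos
  have hle : ∀ i ∈ Finset.univ, f (1 + σ ^ 2) ≤ f (hM.isHermitian.eigenvalues i) :=
    fun i _ => (key _ (hlam i)).1
  have hsum : (r : ℝ) * f (1 + σ ^ 2) ≤ ∑ i, f (hM.isHermitian.eigenvalues i) := by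
    calc (r : ℝ) * f (1 + σ ^ 2) = ∑ _i : Fin r, f (1 + σ ^ 2) := by
          simp [Finset.sum_const, nsmul_eq_mul]
      _ ≤ _ := Finset.sum_le_sum hle
  refine ⟨hsum, ?_, ?_⟩
  · -- equality → M = (1+σ²) • 1
    intro heq
    have heqsum : ∑ _i : Fin r, f (1 + σ ^ 2) = ∑ i, f (hM.isHermitian.eigenvalues i) := by
      rw [heq]; simp [Finset.sum_const, nsmul_eq_mul]
    have hall : ∀ i ∈ Finset.univ, f (1 + σ ^ 2) = f (hM.isHermitian.eigenvalues i) :=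
      (Finset.sum_eq_sum_iff_of_le hle).mp heqsum
    have hev : ∀ i, hM.isHermitian.eigenvalues i = 1 + σ ^ 2 := by
      intro i
      exact (key _ (hlam i)).2.mp ((hall i (Finset.mem_univ i)).symm)
    have hdiag : Matrix.diagonal (RCLike.ofReal ∘ hM.isHermitian.eigenvalues)
        = (1 + σ ^ 2) • (1 : Matrix (Fin r) (Fin r) ℝ) := by
      have : (RCLike.ofReal ∘ hM.isHermitian.eigenvalues : Fin r → ℝ)
          = fun _ => (1 + σ ^ 2 : ℝ) := by
        funext i; simp [Function.comp, hev i]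
      rw [this]
      ext i j
      by_cases h : i = j <;>
        simp [Matrix.diagonal_apply, Matrix.one_apply, h]
    have := hM.isHermitian.spectral_theorem
    rw [hdiag] at this
    rw [this, map_smul, map_one]
  · -- M = (1+σ²) • 1 → equality
    intro hMeq
    subst hMeq
    have hdiag := hM.isHermitian.conjStarAlgAut_star_eigenvectorUnitary
    rw [map_smul, map_one] at hdiag
    have hev : ∀ i, hM.isHermitian.eigenvalues i = 1 + σ ^ 2 := by
      intro i
      have := congrArg (fun A => A i i) hdiag
      simpa using this.symm
    calc ∑ i, f (hM.isHermitian.eigenvalues i) = ∑ _i : Fin r, f (1 + σ ^ 2) := by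
          refine Finset.sum_congr rfl fun i _ => by rw [hev i]
      _ = (r : ℝ) * f (1 + σ ^ 2) := by simp [Finset.sum_const, nsmul_eq_mul]
end

section
/- Let d, r be positive integers with r ≤ d, let E and U be d × r real matrices each with orthonormal columns (Eᵀ E = I_r and Uᵀ U = I_r), let M be an r × r symmetric real matrix, and let c, s > 0. Setting γ := 1/(c(c+1)), the following identity holds: tr( (E Eᵀ + c I_d)⁻² (U M Uᵀ + s I_d) ) = c⁻² tr(M) + (γ² − 2 c⁻¹ γ) tr(E Eᵀ U M Uᵀ) + s ( d c⁻² + (γ² − 2 c⁻¹ γ) r ). -/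
open Matrix

/-- For `E, U` d × r real matrices with orthonormal columns (`r ≤ d`),
`M` an `r × r` symmetric real matrix, `c, s > 0`, and `γ := 1/(c(c+1))`,
`tr((E Eᵀ + c I_d)⁻² (U M Uᵀ + s I_d)) = c⁻² tr(M) + (γ² − 2 c⁻¹ γ) tr(E Eᵀ U M Uᵀ)
  + s (d c⁻² + (γ² − 2 c⁻¹ γ) r)`. -/
theorem trace_cross_term_identity {d r : ℕ} (hd : 0 < d) (hr : 0 < r) (hrd : r ≤ d)
    (E U : Matrix (Fin d) (Fin r) ℝ) (hE : Eᵀ * E = 1) (hU : Uᵀ * U = 1)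
    (M : Matrix (Fin r) (Fin r) ℝ) (hMsym : M.IsSymm)
    (c s : ℝ) (hc : 0 < c) (hs : 0 < s)
    (γ : ℝ) (hγ : γ = 1 / (c * (c + 1))) :
    (((E * Eᵀ + c • (1 : Matrix (Fin d) (Fin d) ℝ))⁻¹ ^ 2) *
        (U * M * Uᵀ + s • (1 : Matrix (Fin d) (Fin d) ℝ))).trace =
      (c ^ 2)⁻¹ * M.trace + (γ ^ 2 - 2 * c⁻¹ * γ) * (E * Eᵀ * U * M * Uᵀ).trace +
        s * ((d : ℝ) * (c ^ 2)⁻¹ + (γ ^ 2 - 2 * c⁻¹ * γ) * (r : ℝ)) := by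
  have hc0 : c ≠ 0 := hc.ne'
  have hc1 : c + 1 ≠ 0 := by positivity
  set P : Matrix (Fin d) (Fin d) ℝ := E * Eᵀ with hP
  have hP2 : P * P = P := by
    calc P * P = E * (Eᵀ * E) * Eᵀ := by simp [hP, Matrix.mul_assoc]
    _ = P := by rw [hE]; simp [hP]
  set B : Matrix (Fin d) (Fin d) ℝ := c⁻¹ • 1 - γ • P with hB
  have hAB : (P + c • 1) * B = 1 := by
    have h1 : γ * (c + 1) = c⁻¹ := by
      rw [hγ]; field_simp
    simp only [hB, Matrix.mul_sub, Matrix.add_mul, Matrix.smul_mul, Matrix.mul_smul,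
      Matrix.one_mul, Matrix.mul_one, smul_smul, hP2]
    match_scalars <;> (try simp only [hγ]) <;> field_simp <;> ring
  have hinv : (P + c • (1 : Matrix (Fin d) (Fin d) ℝ))⁻¹ = B :=
    Matrix.inv_eq_right_inv hAB
  have hsq : (P + c • (1 : Matrix (Fin d) (Fin d) ℝ))⁻¹ ^ 2
      = (c^2)⁻¹ • 1 + (γ ^ 2 - 2 * c⁻¹ * γ) • P := by
    rw [hinv, sq, hB]
    simp only [Matrix.mul_sub, Matrix.sub_mul, Matrix.smul_mul, Matrix.mul_smul,
      Matrix.one_mul, Matrix.mul_one, smul_smul, hP2]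
    match_scalars <;> field_simp <;> ring
  rw [hsq]
  have htrP : P.trace = (r : ℝ) := by
    rw [hP, Matrix.trace_mul_comm, hE, Matrix.trace_one]
    simp
  have htrU : (U * M * Uᵀ).trace = M.trace := by
    rw [Matrix.trace_mul_comm, ← Matrix.mul_assoc, hU, Matrix.one_mul]
  have htrPU : (P * (U * M * Uᵀ)).trace = (E * Eᵀ * U * M * Uᵀ).trace := by
    simp [hP, Matrix.mul_assoc]
  simp only [Matrix.mul_add, Matrix.add_mul, Matrix.smul_mul, Matrix.mul_smul,
    Matrix.one_mul, Matrix.mul_one, Matrix.trace_add, Matrix.trace_smul, smul_eq_mul,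
    htrU, htrPU, htrP, Matrix.trace_one]
  simp only [Fintype.card_fin]
  push_cast
  ring
end

section
/- Let d, r be positive integers with r < d, and let E be a d × r real matrix with orthonormal columns (Eᵀ E = I_r). Fix σ > 0 and a measurable noise schedule σ_• : (0,1) → ℝ with 0 < σ_min ≤ σ_t ≤ σ_max < ∞ for all t ∈ (0,1). Then the time-averaged coefficient κ := ∫₀¹ [ 1/((σ² + σ_t²)² (σ² + σ_t² + 1)²) − 2/((σ² + σ_t²)² (σ² + σ_t² + 1)) ] dt is strictly negative, and consequently, for any fixed r × r symmetric positive definite matrix Σ, the function U ↦ κ · tr(E Eᵀ U Σ Uᵀ) over {U ∈ ℝ^{d×r} : Uᵀ U = I_r} is minimized exactly on the set {E Q : Q an r × r orthogonal matrix}, where it takes the value κ · tr(Σ). -/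
open Matrix MeasureTheory

private lemma diag_entry_eq {n r : ℕ} (D : Matrix (Fin n) (Fin r) ℝ)
    (S : Matrix (Fin r) (Fin r) ℝ) (i : Fin n) :
    (D * S * Dᵀ) i i = (D i) ⬝ᵥ (S *ᵥ (D i)) := by
  simp only [mul_apply, transpose_apply, dotProduct, mulVec, Finset.sum_mul, Finset.mul_sum]
  rw [Finset.sum_comm]
  exact Finset.sum_congr rfl fun k _ => Finset.sum_congr rfl fun j _ => by ring

private lemma trace_DSDt_nonneg {n r : ℕ} {S : Matrix (Fin r) (Fin r) ℝ} (hS : S.PosSemidef)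
    (D : Matrix (Fin n) (Fin r) ℝ) : 0 ≤ (D * S * Dᵀ).trace := by
  rw [Matrix.trace]
  refine Finset.sum_nonneg fun i _ => ?_
  rw [Matrix.diag_apply, diag_entry_eq]
  simpa using hS.dotProduct_mulVec_nonneg (D i)

private lemma eq_zero_of_trace_DSDt {n r : ℕ} {S : Matrix (Fin r) (Fin r) ℝ} (hS : S.PosDef)
    {D : Matrix (Fin n) (Fin r) ℝ} (h : (D * S * Dᵀ).trace = 0) : D = 0 := by
  have hrow : ∀ i, D i = 0 := by
    intro i
    by_contra hne
    have hpos : 0 < (D * S * Dᵀ).diag i := by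
      rw [Matrix.diag_apply, diag_entry_eq]
      simpa using hS.dotProduct_mulVec_pos (x := D i) hne
    have hnn : ∀ j ∈ Finset.univ, 0 ≤ (D * S * Dᵀ).diag j := fun j _ => by
      rw [Matrix.diag_apply, diag_entry_eq]; simpa using hS.posSemidef.dotProduct_mulVec_nonneg (D j)
    have := (Finset.sum_eq_zero_iff_of_nonneg hnn).mp h i (Finset.mem_univ i)
    exact absurd this (ne_of_gt hpos)
  ext i j
  simpa using congrFun (hrow i) j

private lemma trace_split {d r : ℕ} (E W : Matrix (Fin d) (Fin r) ℝ)
    (S : Matrix (Fin r) (Fin r) ℝ) (hE : Eᵀ * E = 1) (hW : Wᵀ * W = 1) :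
    ((W - E * Eᵀ * W) * S * (W - E * Eᵀ * W)ᵀ).trace
      = S.trace - (E * Eᵀ * W * S * Wᵀ).trace := by
  have expand : (W - E * Eᵀ * W) * S * (W - E * Eᵀ * W)ᵀ
      = W * (S * Wᵀ) - W * (S * (Wᵀ * (E * Eᵀ))) - E * (Eᵀ * (W * (S * Wᵀ)))
        + E * (Eᵀ * (W * (S * (Wᵀ * (E * Eᵀ))))) := by
    simp only [transpose_sub, transpose_mul, transpose_transpose, Matrix.sub_mul,
      Matrix.mul_sub, Matrix.mul_assoc]
    abel
  have hT2 : (W * (S * (Wᵀ * (E * Eᵀ)))).trace = ((E * Eᵀ) * (W * (S * Wᵀ))).trace := by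
    rw [show W * (S * (Wᵀ * (E * Eᵀ))) = (W * (S * Wᵀ)) * (E * Eᵀ) by
      simp only [Matrix.mul_assoc], trace_mul_comm]
  have hT3 : (E * (Eᵀ * (W * (S * Wᵀ)))).trace = ((E * Eᵀ) * (W * (S * Wᵀ))).trace := by
    simp only [Matrix.mul_assoc]
  have hT4 : (E * (Eᵀ * (W * (S * (Wᵀ * (E * Eᵀ)))))).trace
      = ((E * Eᵀ) * (W * (S * Wᵀ))).trace := by
    rw [show E * (Eᵀ * (W * (S * (Wᵀ * (E * Eᵀ))))) = ((E * Eᵀ) * (W * (S * Wᵀ))) * (E * Eᵀ) by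
      simp only [Matrix.mul_assoc], trace_mul_comm, ← Matrix.mul_assoc,
      show E * Eᵀ * (E * Eᵀ) = E * Eᵀ by
        rw [Matrix.mul_assoc E Eᵀ (E * Eᵀ), ← Matrix.mul_assoc Eᵀ E Eᵀ, hE, Matrix.one_mul]]
  have hT1 : (W * (S * Wᵀ)).trace = S.trace := by
    rw [trace_mul_comm, Matrix.mul_assoc, hW, Matrix.mul_one]
  have hgoal : (E * Eᵀ * W * S * Wᵀ).trace = ((E * Eᵀ) * (W * (S * Wᵀ))).trace := by
    simp only [Matrix.mul_assoc]
  rw [expand, trace_add, trace_sub, trace_sub, hT1, hT2, hT3, hT4, hgoal]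
  ring

private lemma trace_le_traceS {d r : ℕ} (E W : Matrix (Fin d) (Fin r) ℝ)
    (S : Matrix (Fin r) (Fin r) ℝ) (hE : Eᵀ * E = 1) (hW : Wᵀ * W = 1) (hS : S.PosDef) :
    (E * Eᵀ * W * S * Wᵀ).trace ≤ S.trace := by
  have h := trace_split E W S hE hW
  have h2 := trace_DSDt_nonneg hS.posSemidef (W - E * Eᵀ * W)
  linarith

private lemma trace_EQ_eq {d r : ℕ} (E : Matrix (Fin d) (Fin r) ℝ)
    (Q : Matrix (Fin r) (Fin r) ℝ) (S : Matrix (Fin r) (Fin r) ℝ)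
    (hE : Eᵀ * E = 1) (hQ : Qᵀ * Q = 1) :
    (E * Eᵀ * (E * Q) * S * (E * Q)ᵀ).trace = S.trace := by
  have h1 : E * Eᵀ * (E * Q) = E * Q := by
    rw [Matrix.mul_assoc E Eᵀ (E * Q), ← Matrix.mul_assoc Eᵀ E Q, hE, Matrix.one_mul]
  rw [h1, transpose_mul,
    show E * Q * S * (Qᵀ * Eᵀ) = E * (Q * S * Qᵀ * Eᵀ) by simp only [Matrix.mul_assoc],
    trace_mul_comm, Matrix.mul_assoc (Q * S * Qᵀ) Eᵀ E, hE, Matrix.mul_one,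
    trace_mul_comm, ← Matrix.mul_assoc, hQ, Matrix.one_mul]

set_option maxHeartbeats 1000000 in
/-- The time-averaged coefficient
`κ = ∫₀¹ [1/((σ² + σ_t²)²(σ² + σ_t² + 1)²) − 2/((σ² + σ_t²)²(σ² + σ_t² + 1))] dt`
is strictly negative, and for any fixed `r × r` symmetric positive definite `S`, the
function `U ↦ κ·tr(E Eᵀ U S Uᵀ)` over `{U : Uᵀ U = I_r}` is minimized exactly on
`{E Q : Q orthogonal}`, where it takes the value `κ·tr(S)`. -/
theorem kappa_neg_and_minimizers {d r : ℕ} (hd : 0 < d) (hr : 0 < r) (hrd : r < d)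
    (E : Matrix (Fin d) (Fin r) ℝ) (hE : Eᵀ * E = 1)
    (σ : ℝ) (hσ : 0 < σ)
    (σt : ℝ → ℝ) (hmeas : Measurable σt)
    (σmin σmax : ℝ) (hσmin : 0 < σmin)
    (hbound : ∀ t ∈ Set.Ioo (0 : ℝ) 1, σmin ≤ σt t ∧ σt t ≤ σmax)
    (κ : ℝ)
    (hκ : κ = ∫ t in Set.Ioo (0 : ℝ) 1,
      (1 / ((σ ^ 2 + (σt t) ^ 2) ^ 2 * (σ ^ 2 + (σt t) ^ 2 + 1) ^ 2) -
        2 / ((σ ^ 2 + (σt t) ^ 2) ^ 2 * (σ ^ 2 + (σt t) ^ 2 + 1)))) :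
    κ < 0 ∧
      ∀ S : Matrix (Fin r) (Fin r) ℝ, S.IsSymm → S.PosDef →
        ({U : Matrix (Fin d) (Fin r) ℝ | Uᵀ * U = 1 ∧
            ∀ W : Matrix (Fin d) (Fin r) ℝ, Wᵀ * W = 1 →
              κ * (E * Eᵀ * U * S * Uᵀ).trace ≤ κ * (E * Eᵀ * W * S * Wᵀ).trace} =
          {U : Matrix (Fin d) (Fin r) ℝ |
            ∃ Q : Matrix (Fin r) (Fin r) ℝ, Qᵀ * Q = 1 ∧ U = E * Q}) ∧
        ∀ Q : Matrix (Fin r) (Fin r) ℝ, Qᵀ * Q = 1 →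
          κ * (E * Eᵀ * (E * Q) * S * (E * Q)ᵀ).trace = κ * S.trace := by
  -- notation
  set F : ℝ → ℝ := fun t =>
    1 / ((σ ^ 2 + (σt t) ^ 2) ^ 2 * (σ ^ 2 + (σt t) ^ 2 + 1) ^ 2) -
      2 / ((σ ^ 2 + (σt t) ^ 2) ^ 2 * (σ ^ 2 + (σt t) ^ 2 + 1)) with hF
  have hhalf : (1 / 2 : ℝ) ∈ Set.Ioo (0 : ℝ) 1 := by norm_num
  have hminmax : σmin ≤ σmax := le_trans (hbound _ hhalf).1 (hbound _ hhalf).2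
  have hM : (0 : ℝ) < σ ^ 2 + σmax ^ 2 := by nlinarith
  set M : ℝ := σ ^ 2 + σmax ^ 2 with hMdef
  have hMden : (0 : ℝ) < M ^ 2 * (M + 1) := by nlinarith
  set c : ℝ := 1 / (M ^ 2 * (M + 1)) with hcdef
  have hc : 0 < c := one_div_pos.mpr hMden
  have habound : ∀ t ∈ Set.Ioo (0 : ℝ) 1,
      σ ^ 2 + σmin ^ 2 ≤ σ ^ 2 + (σt t) ^ 2 ∧ σ ^ 2 + (σt t) ^ 2 ≤ M := by
    intro t ht
    obtain ⟨h1, h2⟩ := hbound t ht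
    constructor <;> nlinarith
  have key : ∀ t ∈ Set.Ioo (0 : ℝ) 1, F t ≤ -c := by
    intro t ht
    obtain ⟨hma, haM⟩ := habound t ht
    set a : ℝ := σ ^ 2 + (σt t) ^ 2 with hadef
    have ha : 0 < a := by nlinarith
    have hden : (0 : ℝ) < a ^ 2 * (a + 1) := by nlinarith
    have h1 : 1 / (a ^ 2 * (a + 1) ^ 2) ≤ 1 / (a ^ 2 * (a + 1)) :=
      one_div_le_one_div_of_le hden (by nlinarith)
    have hprod : a ^ 2 * (a + 1) ≤ M ^ 2 * (M + 1) :=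
      mul_le_mul (by nlinarith) (by linarith) (by linarith) (by positivity)
    have h2 : c ≤ 1 / (a ^ 2 * (a + 1)) :=
      one_div_le_one_div_of_le hden hprod
    have h3 : (2 : ℝ) / (a ^ 2 * (a + 1)) = 2 * (1 / (a ^ 2 * (a + 1))) := by ring
    simp only [hF]
    rw [← hadef] at *
    linarith [h1, h2]
  -- strict negativity of κ
  have hm : (0 : ℝ) < σ ^ 2 + σmin ^ 2 := by nlinarith
  have hFmeas : Measurable F := by fun_prop
  have hvol : volume (Set.Ioo (0 : ℝ) 1) = 1 := by
    rw [Real.volume_Ioo]; norm_num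
  have hint : IntegrableOn F (Set.Ioo (0 : ℝ) 1) := by
    refine Measure.integrableOn_of_bounded (M := 1 / ((σ ^ 2 + σmin ^ 2) ^ 2 *
        (σ ^ 2 + σmin ^ 2 + 1) ^ 2) + 2 / ((σ ^ 2 + σmin ^ 2) ^ 2 * (σ ^ 2 + σmin ^ 2 + 1)))
      (by rw [hvol]; exact ENNReal.one_ne_top) hFmeas.aestronglyMeasurable ?_
    filter_upwards [ae_restrict_mem measurableSet_Ioo] with t ht
    obtain ⟨hma, haM⟩ := habound t ht
    set m : ℝ := σ ^ 2 + σmin ^ 2 with hmdef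
    set a : ℝ := σ ^ 2 + (σt t) ^ 2 with hadef
    have ha : 0 < a := lt_of_lt_of_le hm hma
    have hx : (0 : ℝ) < a ^ 2 * (a + 1) ^ 2 := by positivity
    have hy : (0 : ℝ) < a ^ 2 * (a + 1) := by positivity
    have hmx : (0 : ℝ) < m ^ 2 * (m + 1) ^ 2 := by positivity
    have hmy : (0 : ℝ) < m ^ 2 * (m + 1) := by positivity
    have b1 : 1 / (a ^ 2 * (a + 1) ^ 2) ≤ 1 / (m ^ 2 * (m + 1) ^ 2) :=
      one_div_le_one_div_of_le hmx
        (mul_le_mul (by nlinarith) (by nlinarith) (by positivity) (by positivity))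
    have b2 : 2 / (a ^ 2 * (a + 1)) ≤ 2 / (m ^ 2 * (m + 1)) :=
      div_le_div_of_nonneg_left (by norm_num) hmy
        (mul_le_mul (by nlinarith) (by linarith) (by positivity) (by positivity))
    have hxn : (0 : ℝ) ≤ 1 / (a ^ 2 * (a + 1) ^ 2) := by positivity
    have hyn : (0 : ℝ) ≤ 2 / (a ^ 2 * (a + 1)) := by positivity
    simp only [hF, Real.norm_eq_abs]
    rw [← hadef]
    rw [abs_le]
    constructor <;> nlinarith
  have hκneg : κ < 0 := by
    have step : κ ≤ -c := by
      rw [hκ]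
      have mono : (∫ t in Set.Ioo (0 : ℝ) 1, F t) ≤ ∫ _t in Set.Ioo (0 : ℝ) 1, (-c) :=
        setIntegral_mono_on hint (integrableOn_const (by rw [hvol]; norm_num))
          measurableSet_Ioo key
      have hconst : (∫ _t in Set.Ioo (0 : ℝ) 1, (-c)) = -c := by
        rw [setIntegral_const, Measure.real, hvol]; simp
      exact le_trans mono (le_of_eq hconst)
    linarith
  refine ⟨hκneg, fun S _hsymm hSpd => ⟨?_, fun Q hQ => by rw [trace_EQ_eq E Q S hE hQ]⟩⟩
  ext U
  simp only [Set.mem_setOf_eq]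
  constructor
  · rintro ⟨hU, hmin⟩
    have hEE : E * Eᵀ * E = E := by
      rw [Matrix.mul_assoc, hE, Matrix.mul_one]
    have hEtr : (E * Eᵀ * E * S * Eᵀ).trace = S.trace := by
      rw [hEE, trace_mul_comm, ← Matrix.mul_assoc, hE, Matrix.one_mul]
    have h0 := hmin E hE
    rw [hEtr] at h0
    have hge : S.trace ≤ (E * Eᵀ * U * S * Uᵀ).trace := by
      by_contra hlt
      push_neg at hlt
      have := mul_lt_mul_of_neg_left hlt hκneg
      linarith
    have heq : (E * Eᵀ * U * S * Uᵀ).trace = S.trace :=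
      le_antisymm (trace_le_traceS E U S hE hU hSpd) hge
    have hzero : ((U - E * Eᵀ * U) * S * (U - E * Eᵀ * U)ᵀ).trace = 0 := by
      rw [trace_split E U S hE hU, heq]; ring
    have hD : U - E * Eᵀ * U = 0 := eq_zero_of_trace_DSDt hSpd hzero
    have hU' : E * (Eᵀ * U) = U := by
      rw [← Matrix.mul_assoc]; exact (sub_eq_zero.mp hD).symm
    refine ⟨Eᵀ * U, ?_, hU'.symm⟩
    rw [transpose_mul, transpose_transpose, Matrix.mul_assoc, hU', hU]
  · rintro ⟨Q, hQ, rfl⟩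
    have hUortho : (E * Q)ᵀ * (E * Q) = 1 := by
      rw [transpose_mul, Matrix.mul_assoc, ← Matrix.mul_assoc Eᵀ E Q, hE, Matrix.one_mul, hQ]
    refine ⟨hUortho, fun W hW => ?_⟩
    rw [trace_EQ_eq E Q S hE hQ]
    exact mul_le_mul_of_nonpos_left (trace_le_traceS E W S hE hW hSpd) (le_of_lt hκneg)
end
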